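/- There exists a strategy S (namely: each player points at the hat on his own head in the position of the first black hat on the partner's head, defaulting to hat 0 if the partner has no black hat) such that for every p ∈ [0,1], V_S(p) = 2p²/(1+p). In particular, V(p) ≥ 2p²/(1+p) for all p ∈ [0,1]. -/

import Mathlib

open MeasureTheory ENNReal

/-- `μ` is the i.i.d. Bernoulli(`p`) product measure on `ℕ → Bool`
(`true` = white), characterized by its values on cylinder sets. -/
def IsBernoulliProduct (p : ℝ) (μ : Measure (ℕ → Bool)) : Prop :=
  IsProbabilityMeasure μ ∧
    ∀ (s : Finset ℕ) (c : ℕ → Bool),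
      μ {x | ∀ n ∈ s, x n = c n} =
        ∏ n ∈ s, (if c n = true then ENNReal.ofReal p else ENNReal.ofReal (1 - p))

/-- A strategy: a pair of measurable functions, each taking the partner's
hat configuration to the index of the hat the player points at. -/
structure Strategy where
  f₁ : (ℕ → Bool) → ℕ
  f₂ : (ℕ → Bool) → ℕ
  meas₁ : Measurable f₁
  meas₂ : Measurable f₂

/-- The winning probability of a strategy, when each player's hats are
distributed according to `μ`, independently. -/
noncomputable def winProb (S : Strategy) (μ : Measure (ℕ → Bool)) : ℝ :=
  ((μ.prod μ) {x : (ℕ → Bool) × (ℕ → Bool) |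
    x.1 (S.f₁ x.2) = true ∧ x.2 (S.f₂ x.1) = true}).toReal

/-- The value of the game: supremum of winning probabilities over all strategies. -/
noncomputable def gameValue (μ : Measure (ℕ → Bool)) : ℝ :=
  ⨆ S : Strategy, winProb S μ

/-- The index of the first black (`false`) hat, defaulting to `0` if there is none. -/
noncomputable def firstBlack (x : ℕ → Bool) : ℕ :=
  haveI := Classical.dec (∃ n, x n = false)
  if h : ∃ n, x n = false then Nat.find h else 0

namespace LevineAux

def Sset (k : ℕ) : Set (ℕ → Bool) := {x | (∀ i < k, x i = true) ∧ x k = false}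

lemma measurableSet_coord (i : ℕ) (b : Bool) : MeasurableSet {x : ℕ → Bool | x i = b} := by
  have h : {x : ℕ → Bool | x i = b} = (fun x : ℕ → Bool => x i) ⁻¹' {b} := rfl
  rw [h]; exact measurable_pi_apply i (measurableSet_singleton b)

lemma measurableSet_Sset (k : ℕ) : MeasurableSet (Sset k) := by
  have h : Sset k = (⋂ i ∈ Set.Iio k, {x : ℕ → Bool | x i = true}) ∩ {x | x k = false} := by
    ext x; simp [Sset]
  rw [h]
  exact (MeasurableSet.biInter (Set.to_countable _) fun i _ => measurableSet_coord i true).inter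
    (measurableSet_coord k false)

lemma firstBlack_eq {x : ℕ → Bool} {k : ℕ} (hx : x ∈ Sset k) : firstBlack x = k := by
  have h : ∃ n, x n = false := ⟨k, hx.2⟩
  classical
  rw [firstBlack, dif_pos h, Nat.find_eq_iff]
  exact ⟨hx.2, fun m hm => by simp [hx.1 m hm]⟩

lemma mem_Sset_firstBlack {x : ℕ → Bool} (h : ∃ n, x n = false) :
    x ∈ Sset (firstBlack x) := by
  classical
  rw [firstBlack, dif_pos h]
  refine ⟨fun i hi => ?_, Nat.find_spec h⟩
  exact eq_true_of_ne_false (Nat.find_min h hi)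

lemma measurable_firstBlack : Measurable firstBlack := by
  apply measurable_to_countable'
  intro n
  have h : firstBlack ⁻¹' {n} = Sset n ∪ {x | (∀ m, x m = true) ∧ n = 0} := by
    ext x
    simp only [Set.mem_preimage, Set.mem_singleton_iff, Set.mem_union, Set.mem_setOf_eq]
    by_cases h : ∃ m, x m = false
    · constructor
      · rintro rfl
        exact Or.inl (mem_Sset_firstBlack h)
      · rintro (hx | ⟨hw, rfl⟩)
        · exact firstBlack_eq hx
        · obtain ⟨m, hm⟩ := h; rw [hw m] at hm; exact absurd hm (by simp)
    · push_neg at h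
      have hw : ∀ m, x m = true := fun m => eq_true_of_ne_false (h m)
      classical
      rw [firstBlack, dif_neg (by push_neg; exact h)]
      constructor
      · rintro rfl
        exact Or.inr ⟨hw, rfl⟩
      · rintro (hx | ⟨_, rfl⟩)
        · exact absurd hx.2 (by simp [hw n])
        · rfl
  rw [h]
  refine (measurableSet_Sset n).union ?_
  rcases Nat.eq_zero_or_pos n with rfl | hn
  · have he : {x : ℕ → Bool | (∀ m, x m = true) ∧ (0:ℕ) = 0} = ⋂ m, {x | x m = true} := by
      ext x; simp
    rw [he]
    exact MeasurableSet.iInter fun m => measurableSet_coord m true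
  · have he : {x : ℕ → Bool | (∀ m, x m = true) ∧ n = 0} = ∅ := by
      ext x; simp [hn.ne']
    rw [he]; exact MeasurableSet.empty

variable {p : ℝ} {μ : Measure (ℕ → Bool)}

lemma measure_Sset (hμ : IsBernoulliProduct p μ) (k : ℕ) :
    μ (Sset k) = (ENNReal.ofReal p) ^ k * ENNReal.ofReal (1 - p) := by
  have hs := hμ.2 (Finset.range (k + 1)) (fun n => decide (n < k))
  have hset : {x : ℕ → Bool | ∀ n ∈ Finset.range (k + 1), x n = decide (n < k)} = Sset k := by
    ext x
    simp only [Set.mem_setOf_eq, Finset.mem_range, Nat.lt_succ_iff, Sset]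
    constructor
    · intro hx
      refine ⟨fun i hi => by rw [hx i hi.le]; simp [hi], by rw [hx k le_rfl]; simp⟩
    · rintro ⟨h1, h2⟩ n hn
      rcases lt_or_eq_of_le hn with hn' | rfl
      · rw [h1 n hn']; simp [hn']
      · rw [h2]; simp
  rw [hset] at hs
  rw [hs, Finset.prod_range_succ]
  have h1 : ∀ n ∈ Finset.range k,
      (if (decide (n < k) : Bool) = true then ENNReal.ofReal p else ENNReal.ofReal (1 - p))
        = ENNReal.ofReal p := by
    intro n hn; simp [Finset.mem_range.mp hn]
  rw [Finset.prod_congr rfl h1, Finset.prod_const, Finset.card_range]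
  simp

lemma measure_Sset_inter (hμ : IsBernoulliProduct p μ) {l k : ℕ} (hlk : l < k) :
    μ (Sset l ∩ {x | x k = true})
      = (ENNReal.ofReal p) ^ (l + 1) * ENNReal.ofReal (1 - p) := by
  have hs := hμ.2 (insert k (Finset.range (l + 1))) (fun n => decide (n ≠ l))
  have hk : k ∉ Finset.range (l + 1) := by simp [Finset.mem_range]; omega
  have hset : {x : ℕ → Bool | ∀ n ∈ insert k (Finset.range (l + 1)), x n = decide (n ≠ l)}
      = Sset l ∩ {x | x k = true} := by
    ext x
    simp only [Set.mem_setOf_eq, Finset.mem_insert, Finset.mem_range, Nat.lt_succ_iff,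
      Set.mem_inter_iff, Sset]
    constructor
    · intro hx
      refine ⟨⟨fun i hi => ?_, ?_⟩, ?_⟩
      · rw [hx i (Or.inr hi.le)]; simp [hi.ne]
      · rw [hx l (Or.inr le_rfl)]; simp
      · rw [hx k (Or.inl rfl)]; simp [hlk.ne']
    · rintro ⟨⟨h1, h2⟩, h3⟩ n hn
      rcases hn with rfl | hn
      · rw [h3]; simp [hlk.ne']
      · rcases lt_or_eq_of_le hn with hn' | rfl
        · rw [h1 n hn']; simp [hn'.ne]
        · rw [h2]; simp
  rw [hset] at hs
  rw [hs, Finset.prod_insert hk, Finset.prod_range_succ]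
  have h1 : ∀ n ∈ Finset.range l,
      (if (decide (n ≠ l) : Bool) = true then ENNReal.ofReal p else ENNReal.ofReal (1 - p))
        = ENNReal.ofReal p := by
    intro n hn; simp [(Finset.mem_range.mp hn).ne]
  rw [Finset.prod_congr rfl h1, Finset.prod_const, Finset.card_range]
  have e1 : (if (decide (k ≠ l) : Bool) = true then ENNReal.ofReal p else ENNReal.ofReal (1 - p))
      = ENNReal.ofReal p := by simp [hlk.ne']
  have e2 : (if (decide (l ≠ l) : Bool) = true then ENNReal.ofReal p else ENNReal.ofReal (1 - p))
      = ENNReal.ofReal (1 - p) := by simp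
  rw [e1, e2, pow_succ]
  ring

lemma measure_allWhite (hp0 : 0 ≤ p) (hp1 : p < 1) (hμ : IsBernoulliProduct p μ) :
    μ {x : ℕ → Bool | ∀ n, x n = true} = 0 := by
  have hN : ∀ N : ℕ, μ {x : ℕ → Bool | ∀ n, x n = true} ≤ ENNReal.ofReal p ^ N := by
    intro N
    have hsub : {x : ℕ → Bool | ∀ n, x n = true}
        ⊆ {x | ∀ n ∈ Finset.range N, x n = (fun _ => true) n} := fun x hx n _ => hx n
    refine le_trans (measure_mono hsub) ?_
    rw [hμ.2]
    simp
  have hq : ENNReal.ofReal p < 1 := ENNReal.ofReal_lt_one.mpr hp1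
  have htend := ENNReal.tendsto_pow_atTop_nhds_zero_of_lt_one hq
  exact le_zero_iff.mp (ge_of_tendsto' htend hN)

def Ek (k l : ℕ) : Set (ℕ → Bool) :=
  if l < k then Sset k else if k < l then Sset k ∩ {x | x l = true} else ∅

def Fk (k l : ℕ) : Set (ℕ → Bool) :=
  if l < k then Sset l ∩ {x | x k = true} else if k < l then Sset l else ∅

lemma Ek_subset (k l : ℕ) : Ek k l ⊆ Sset k := by
  unfold Ek; split_ifs
  · exact subset_rfl
  · exact Set.inter_subset_left
  · exact Set.empty_subset _

lemma Fk_subset (k l : ℕ) : Fk k l ⊆ Sset l := by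
  unfold Fk; split_ifs
  · exact Set.inter_subset_left
  · exact subset_rfl
  · exact Set.empty_subset _

lemma measurableSet_Ek (k l : ℕ) : MeasurableSet (Ek k l) := by
  unfold Ek; split_ifs
  · exact measurableSet_Sset k
  · exact (measurableSet_Sset k).inter (measurableSet_coord l true)
  · exact MeasurableSet.empty

lemma measurableSet_Fk (k l : ℕ) : MeasurableSet (Fk k l) := by
  unfold Fk; split_ifs
  · exact (measurableSet_Sset l).inter (measurableSet_coord k true)
  · exact measurableSet_Sset l
  · exact MeasurableSet.empty

lemma measure_Ek_Fk (hμ : IsBernoulliProduct p μ) (k l : ℕ) :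
    μ (Ek k l) * μ (Fk k l)
      = if k = l then 0
        else (ENNReal.ofReal p) ^ (k + l + 1) * (ENNReal.ofReal (1 - p)) ^ 2 := by
  rcases lt_trichotomy l k with h | rfl | h
  · rw [if_neg h.ne']
    unfold Ek Fk
    rw [if_pos h, if_pos h, measure_Sset hμ, measure_Sset_inter hμ h]
    ring
  · rw [if_pos rfl]
    unfold Ek Fk
    rw [if_neg (lt_irrefl _), if_neg (lt_irrefl _), if_neg (lt_irrefl _),
      if_neg (lt_irrefl _), measure_empty, zero_mul]
  · rw [if_neg h.ne]
    unfold Ek Fk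
    rw [if_neg (by omega), if_pos h, if_neg (by omega), if_pos h,
      measure_Sset hμ, measure_Sset_inter hμ h]
    ring

lemma tsum_f (hp0 : 0 ≤ p) (hp1 : p < 1) :
    (∑' kl : ℕ × ℕ, if kl.1 = kl.2 then 0
        else (ENNReal.ofReal p) ^ (kl.1 + kl.2 + 1) * (ENNReal.ofReal (1 - p)) ^ 2)
      = ENNReal.ofReal (2 * p ^ 2 / (1 + p)) := by
  set q := ENNReal.ofReal p with hqdef
  set r := ENNReal.ofReal (1 - p) with hrdef
  set f : ℕ × ℕ → ℝ≥0∞ := fun kl =>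
    if kl.1 = kl.2 then 0 else q ^ (kl.1 + kl.2 + 1) * r ^ 2 with hfdef
  set g : Bool × ℕ × ℕ → ℕ × ℕ := fun b =>
    if b.1 then (b.2.1 + b.2.2 + 1, b.2.1) else (b.2.1, b.2.1 + b.2.2 + 1) with hgdef
  have hginj : Function.Injective g := by
    rintro ⟨b, m, j⟩ ⟨b', m', j'⟩ h
    simp only [hgdef] at h
    rcases b <;> rcases b' <;>
        simp only [Bool.false_eq_true, if_true, if_false, Prod.mk.injEq] at h ⊢ <;>
      first
        | omega
        | (exfalso; omega)
        | (refine ⟨trivial, ?_, ?_⟩ <;> omega)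
  have hsupp : Function.support f ⊆ Set.range g := by
    rintro ⟨k, l⟩ hkl
    have hne : k ≠ l := by
      intro h; apply hkl; simp [hfdef, h]
    rcases lt_or_gt_of_ne hne with h | h
    · exact ⟨(false, k, l - k - 1), by simp [hgdef]; omega⟩
    · exact ⟨(true, l, k - l - 1), by simp [hgdef]; omega⟩
  have hfg : ∀ bmj : Bool × ℕ × ℕ,
      f (g bmj) = (q ^ 2 * r ^ 2) * ((q ^ 2) ^ bmj.2.1 * q ^ bmj.2.2) := by
    rintro ⟨b, m, j⟩
    have hval : ∀ a c : ℕ, a ≠ c → f (a, c) = q ^ (a + c + 1) * r ^ 2 := by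
      intro a c hac; simp [hfdef, hac]
    rcases b
    · rw [show g (false, m, j) = (m, m + j + 1) from by simp [hgdef]]
      rw [hval _ _ (by omega)]
      rw [show m + (m + j + 1) + 1 = 2 * m + j + 2 from by omega]
      rw [pow_add, pow_add, pow_mul]
      ring
    · rw [show g (true, m, j) = (m + j + 1, m) from by simp [hgdef]]
      rw [hval _ _ (by omega)]
      rw [show m + j + 1 + m + 1 = 2 * m + j + 2 from by omega]
      rw [pow_add, pow_add, pow_mul]
      ring
  rw [← Function.Injective.tsum_eq hginj hsupp]
  calc ∑' bmj : Bool × ℕ × ℕ, f (g bmj)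
      = ∑' bmj : Bool × ℕ × ℕ, (q ^ 2 * r ^ 2) * ((q ^ 2) ^ bmj.2.1 * q ^ bmj.2.2) := by
        exact tsum_congr hfg
    _ = ∑' (b : Bool), ∑' (mj : ℕ × ℕ), (q ^ 2 * r ^ 2) * ((q ^ 2) ^ mj.1 * q ^ mj.2) :=
        ENNReal.tsum_prod'
    _ = 2 * ((q ^ 2 * r ^ 2) * ((1 - q ^ 2)⁻¹ * (1 - q)⁻¹)) := by
        rw [tsum_bool]
        have : (∑' (mj : ℕ × ℕ), (q ^ 2 * r ^ 2) * ((q ^ 2) ^ mj.1 * q ^ mj.2))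
            = (q ^ 2 * r ^ 2) * ((1 - q ^ 2)⁻¹ * (1 - q)⁻¹) := by
          rw [ENNReal.tsum_mul_left]
          congr 1
          rw [ENNReal.tsum_prod']
          simp only [ENNReal.tsum_mul_left]
          rw [ENNReal.tsum_geometric]
          rw [ENNReal.tsum_mul_right, ENNReal.tsum_geometric]
        rw [this, two_mul]
    _ = ENNReal.ofReal (2 * p ^ 2 / (1 + p)) := by
        have hp2 : (0:ℝ) ≤ p ^ 2 := sq_nonneg p
        have h1p : (0:ℝ) < 1 - p := by linarith
        have h1p2 : (0:ℝ) < 1 - p ^ 2 := by nlinarith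
        have hq2 : q ^ 2 = ENNReal.ofReal (p ^ 2) := by
          rw [hqdef, ← ENNReal.ofReal_pow hp0]
        have h1q : 1 - q = ENNReal.ofReal (1 - p) := by
          rw [hqdef, ← ENNReal.ofReal_one, ← ENNReal.ofReal_sub _ hp0]
        have h1q2 : 1 - q ^ 2 = ENNReal.ofReal (1 - p ^ 2) := by
          rw [hq2, ← ENNReal.ofReal_one, ← ENNReal.ofReal_sub _ hp2]
        rw [h1q2, h1q, hq2, hrdef]
        rw [← ENNReal.ofReal_inv_of_pos h1p2, ← ENNReal.ofReal_inv_of_pos h1p]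
        rw [← ENNReal.ofReal_mul (by positivity),
          ← ENNReal.ofReal_pow h1p.le, ← ENNReal.ofReal_mul hp2,
          ← ENNReal.ofReal_mul (by positivity),
          ← ENNReal.ofReal_ofNat 2, ← ENNReal.ofReal_mul (by norm_num)]
        congr 1
        have h1pe : 1 - p ^ 2 = (1 - p) * (1 + p) := by ring
        have h1pne : (1 - p) ≠ 0 := h1p.ne'
        have h1pne' : (1 + p) ≠ 0 := by positivity
        field_simp
        ring
  done

end LevineAux

open LevineAux

/-- There is a strategy (each player points at the position of the first black hat
on the partner's head) whose winning probability is `2p² / (1 + p)` for every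
`p ∈ [0,1]`; consequently `V p ≥ 2p² / (1 + p)`. -/
theorem first_black_strategy
    (μ : ℝ → Measure (ℕ → Bool))
    (hμ : ∀ p ∈ Set.Icc (0 : ℝ) 1, IsBernoulliProduct p (μ p)) :
    ∃ S : Strategy,
      S.f₁ = firstBlack ∧ S.f₂ = firstBlack ∧
      (∀ p ∈ Set.Icc (0 : ℝ) 1, winProb S (μ p) = 2 * p ^ 2 / (1 + p)) ∧
      (∀ p ∈ Set.Icc (0 : ℝ) 1, 2 * p ^ 2 / (1 + p) ≤ gameValue (μ p)) := by
  have hm := LevineAux.measurable_firstBlack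
  have hwin : ∀ p ∈ Set.Icc (0:ℝ) 1,
      winProb ⟨firstBlack, firstBlack, hm, hm⟩ (μ p) = 2 * p ^ 2 / (1 + p) := by
    intro p hp
    obtain ⟨hp0, hp1le⟩ := hp
    have hb := hμ p ⟨hp0, hp1le⟩
    haveI : IsProbabilityMeasure (μ p) := hb.1
    show (((μ p).prod (μ p)) {z : (ℕ → Bool) × (ℕ → Bool) |
        z.1 (firstBlack z.2) = true ∧ z.2 (firstBlack z.1) = true}).toReal
      = 2 * p ^ 2 / (1 + p)
    rcases eq_or_lt_of_le hp1le with rfl | hp1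
    · -- p = 1
      have haWc : (μ 1) {x : ℕ → Bool | ∀ n, x n = true}ᶜ = 0 := by
        have hc : {x : ℕ → Bool | ∀ n, x n = true}ᶜ
            = ⋃ n, {x : ℕ → Bool | x n = false} := by
          ext x
          simp only [Set.mem_compl_iff, Set.mem_setOf_eq, Set.mem_iUnion, not_forall,
            Bool.not_eq_true]
        rw [hc]
        refine measure_iUnion_null fun n => ?_
        have h0 := hb.2 {n} (fun _ => false)
        have hset : {x : ℕ → Bool | ∀ m ∈ ({n} : Finset ℕ), x m = false}
            = {x : ℕ → Bool | x n = false} := by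
          ext x; simp
        rw [hset] at h0
        rw [h0]
        simp
      have hms : MeasurableSet {x : ℕ → Bool | ∀ n, x n = true} := by
        have h : {x : ℕ → Bool | ∀ n, x n = true} = ⋂ n, {x : ℕ → Bool | x n = true} := by
          ext x; simp
        rw [h]; exact MeasurableSet.iInter fun n => measurableSet_coord n true
      have haW : (μ 1) {x : ℕ → Bool | ∀ n, x n = true} = 1 :=
        (prob_compl_eq_zero_iff hms).mp haWc
      have hsub : ({x : ℕ → Bool | ∀ n, x n = true} ×ˢ {x : ℕ → Bool | ∀ n, x n = true})
          ⊆ {z : (ℕ → Bool) × (ℕ → Bool) |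
              z.1 (firstBlack z.2) = true ∧ z.2 (firstBlack z.1) = true} :=
        fun z hz => ⟨hz.1 _, hz.2 _⟩
      have h1 : ((μ 1).prod (μ 1)) {z : (ℕ → Bool) × (ℕ → Bool) |
          z.1 (firstBlack z.2) = true ∧ z.2 (firstBlack z.1) = true} = 1 := by
        refine le_antisymm prob_le_one ?_
        calc (1:ℝ≥0∞) = ((μ 1).prod (μ 1))
              ({x : ℕ → Bool | ∀ n, x n = true} ×ˢ {x : ℕ → Bool | ∀ n, x n = true}) := by
              rw [Measure.prod_prod, haW, one_mul]
          _ ≤ _ := measure_mono hsub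
      rw [h1]
      norm_num
    · -- p < 1
      have hUW : (⋃ kl : ℕ × ℕ, (Ek kl.1 kl.2 ×ˢ Fk kl.1 kl.2))
          ⊆ {z : (ℕ → Bool) × (ℕ → Bool) |
              z.1 (firstBlack z.2) = true ∧ z.2 (firstBlack z.1) = true} := by
        rintro ⟨x₁, x₂⟩ hz
        rw [Set.mem_iUnion] at hz
        obtain ⟨⟨k, l⟩, hz⟩ := hz
        rcases lt_trichotomy l k with h | rfl | h
        · have hz1 : x₁ ∈ Sset k := by simpa [Ek, if_pos h] using hz.1
          have hz2 : x₂ ∈ Sset l ∩ {x | x k = true} := by simpa [Fk, if_pos h] using hz.2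
          refine ⟨?_, ?_⟩
          · rw [firstBlack_eq hz2.1]; exact hz1.1 l h
          · rw [firstBlack_eq hz1]; exact hz2.2
        · exact absurd hz.1 (by simp [Ek])
        · have hz1 : x₁ ∈ Sset k ∩ {x | x l = true} := by
            simpa [Ek, if_neg (lt_asymm h), if_pos h] using hz.1
          have hz2 : x₂ ∈ Sset l := by simpa [Fk, if_neg (lt_asymm h), if_pos h] using hz.2
          refine ⟨?_, ?_⟩
          · rw [firstBlack_eq hz2]; exact hz1.2
          · rw [firstBlack_eq hz1.1]; exact hz2.1 k h
      have hWU : {z : (ℕ → Bool) × (ℕ → Bool) |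
            z.1 (firstBlack z.2) = true ∧ z.2 (firstBlack z.1) = true}
          ⊆ (⋃ kl : ℕ × ℕ, (Ek kl.1 kl.2 ×ˢ Fk kl.1 kl.2))
            ∪ (({x : ℕ → Bool | ∀ n, x n = true} ×ˢ (Set.univ : Set (ℕ → Bool)))
              ∪ ((Set.univ : Set (ℕ → Bool)) ×ˢ {x : ℕ → Bool | ∀ n, x n = true})) := by
        rintro ⟨x₁, x₂⟩ ⟨hw1, hw2⟩
        by_cases h1 : ∃ n, x₁ n = false
        · by_cases h2 : ∃ n, x₂ n = false
          · left
            have hk : x₁ ∈ Sset (firstBlack x₁) := mem_Sset_firstBlack h1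
            have hl : x₂ ∈ Sset (firstBlack x₂) := mem_Sset_firstBlack h2
            rw [Set.mem_iUnion]
            rcases lt_trichotomy (firstBlack x₂) (firstBlack x₁) with h | heq | h
            · refine ⟨(firstBlack x₁, firstBlack x₂), ?_⟩
              simp only [Ek, Fk, if_pos h]
              exact ⟨hk, hl, hw2⟩
            · exfalso
              have hw1' : x₁ (firstBlack x₂) = true := hw1
              rw [heq, hk.2] at hw1'
              exact absurd hw1' (by simp)
            · refine ⟨(firstBlack x₁, firstBlack x₂), ?_⟩
              simp only [Ek, Fk, if_neg (lt_asymm h), if_pos h]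
              exact ⟨⟨hk, hw1⟩, hl⟩
          · right; right
            push_neg at h2
            exact ⟨Set.mem_univ _, fun n => eq_true_of_ne_false (h2 n)⟩
        · right; left
          push_neg at h1
          exact ⟨fun n => eq_true_of_ne_false (h1 n), Set.mem_univ _⟩
      have hBlc : (μ p) {x : ℕ → Bool | ∀ n, x n = true} = 0 :=
        measure_allWhite hp0 hp1 hb
      have hnull : ((μ p).prod (μ p))
          (({x : ℕ → Bool | ∀ n, x n = true} ×ˢ (Set.univ : Set (ℕ → Bool)))
            ∪ ((Set.univ : Set (ℕ → Bool)) ×ˢ {x : ℕ → Bool | ∀ n, x n = true})) = 0 := by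
        apply measure_union_null
        · rw [Measure.prod_prod, hBlc, zero_mul]
        · rw [Measure.prod_prod, hBlc, mul_zero]
      have hWeq : ((μ p).prod (μ p)) {z : (ℕ → Bool) × (ℕ → Bool) |
            z.1 (firstBlack z.2) = true ∧ z.2 (firstBlack z.1) = true}
          = ((μ p).prod (μ p)) (⋃ kl : ℕ × ℕ, (Ek kl.1 kl.2 ×ˢ Fk kl.1 kl.2)) := by
        refine le_antisymm ?_ (measure_mono hUW)
        calc ((μ p).prod (μ p)) _ ≤ ((μ p).prod (μ p)) _ := measure_mono hWU
          _ ≤ ((μ p).prod (μ p)) (⋃ kl : ℕ × ℕ, (Ek kl.1 kl.2 ×ˢ Fk kl.1 kl.2))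
              + ((μ p).prod (μ p)) _ := measure_union_le _ _
          _ = ((μ p).prod (μ p)) (⋃ kl : ℕ × ℕ, (Ek kl.1 kl.2 ×ˢ Fk kl.1 kl.2)) := by
              rw [hnull, add_zero]
      have hdisj : Pairwise (Function.onFun Disjoint
          (fun kl : ℕ × ℕ => Ek kl.1 kl.2 ×ˢ Fk kl.1 kl.2)) := by
        rintro ⟨k, l⟩ ⟨k', l'⟩ hne
        rw [Function.onFun, Set.disjoint_left]
        rintro ⟨x₁, x₂⟩ ha hb'
        apply hne
        have e1 : k = k' := by
          have h1 : x₁ ∈ Sset k := Ek_subset _ _ ha.1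
          have h2 : x₁ ∈ Sset k' := Ek_subset _ _ hb'.1
          rw [← firstBlack_eq h1, ← firstBlack_eq h2]
        have e2 : l = l' := by
          have h1 : x₂ ∈ Sset l := Fk_subset _ _ ha.2
          have h2 : x₂ ∈ Sset l' := Fk_subset _ _ hb'.2
          rw [← firstBlack_eq h1, ← firstBlack_eq h2]
        rw [e1, e2]
      have hU : ((μ p).prod (μ p)) (⋃ kl : ℕ × ℕ, (Ek kl.1 kl.2 ×ˢ Fk kl.1 kl.2))
          = ∑' kl : ℕ × ℕ, (μ p) (Ek kl.1 kl.2) * (μ p) (Fk kl.1 kl.2) := by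
        rw [measure_iUnion hdisj
          (fun kl => (measurableSet_Ek _ _).prod (measurableSet_Fk _ _))]
        exact tsum_congr fun kl => Measure.prod_prod _ _
      have hval : ((μ p).prod (μ p)) {z : (ℕ → Bool) × (ℕ → Bool) |
            z.1 (firstBlack z.2) = true ∧ z.2 (firstBlack z.1) = true}
          = ENNReal.ofReal (2 * p ^ 2 / (1 + p)) := by
        rw [hWeq, hU]
        have hc : (∑' kl : ℕ × ℕ, (μ p) (Ek kl.1 kl.2) * (μ p) (Fk kl.1 kl.2))
            = ∑' kl : ℕ × ℕ, (if kl.1 = kl.2 then 0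
                else (ENNReal.ofReal p) ^ (kl.1 + kl.2 + 1) * (ENNReal.ofReal (1 - p)) ^ 2) :=
          tsum_congr fun kl => measure_Ek_Fk hb kl.1 kl.2
        rw [hc]
        exact tsum_f hp0 hp1
      rw [hval, ENNReal.toReal_ofReal
        (div_nonneg (by positivity) (by linarith))]
  refine ⟨⟨firstBlack, firstBlack, hm, hm⟩, rfl, rfl, hwin, ?_⟩
  intro p hp
  haveI : IsProbabilityMeasure (μ p) := (hμ p hp).1
  rw [← hwin p hp]
  have hbdd : BddAbove (Set.range (fun T : Strategy => winProb T (μ p))) := by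
    refine ⟨1, ?_⟩
    rintro x ⟨T, rfl⟩
    have hle : ((μ p).prod (μ p)) {z : (ℕ → Bool) × (ℕ → Bool) |
        z.1 (T.f₁ z.2) = true ∧ z.2 (T.f₂ z.1) = true} ≤ 1 := prob_le_one
    calc winProb T (μ p) ≤ (1:ℝ≥0∞).toReal := ENNReal.toReal_mono one_ne_top hle
      _ = 1 := by simp
  exact le_ciSup hbdd (⟨firstBlack, firstBlack, hm, hm⟩ : Strategy)
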